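/- Let G be a graph, r a positive integer, and C a clique class of G with |C| > r. Let G' be the graph obtained from G by deleting all but r vertices of C. Then, for every positive integers k and t with t ≤ r, G admits a k-equistable structure with target t if and only if G' admits a k-equistable structure with target t. -/

import Mathlib

open Finset

variable {V : Type*}

/-- Two vertices are twins if they have the same neighbors other than each other. -/
def Twins (G : SimpleGraph V) (u v : V) : Prop :=
  G.neighborSet u \ {v} = G.neighborSet v \ {u}

/-- A twin class is an equivalence class of the twin relation. -/
def TwinClass (G : SimpleGraph V) (C : Set V) : Prop :=
  ∃ u, C = {v | Twins G u v}

/-- A stable (independent) set of vertices. -/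
def IsStable (G : SimpleGraph V) (S : Set V) : Prop :=
  ∀ ⦃x⦄, x ∈ S → ∀ ⦃y⦄, y ∈ S → ¬ G.Adj x y

/-- A maximal stable set. -/
def IsMaxStable [Fintype V] [DecidableEq V] (G : SimpleGraph V) (S : Finset V) : Prop :=
  IsStable G ↑S ∧ ∀ T : Finset V, IsStable G ↑T → S ⊆ T → S = T

/-- `(w, t)` is an equistable structure of `G`: a set is a maximal stable set
iff its total weight is `t`. -/
def EquistableStruct [Fintype V] [DecidableEq V] (G : SimpleGraph V) (w : V → ℕ) (t : ℕ) : Prop :=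
  ∀ S : Finset V, IsMaxStable G S ↔ ∑ x ∈ S, w x = t

/-- `G` is `k`-equistable: it has an equistable structure with weights in `{1,…,k}`. -/
def KEquistable [Fintype V] [DecidableEq V] (G : SimpleGraph V) (k : ℕ) : Prop :=
  ∃ t : ℕ, 0 < t ∧ ∃ w : V → ℕ, (∀ x, 1 ≤ w x ∧ w x ≤ k) ∧ EquistableStruct G w t

/-- `G` is target-`t` equistable: it has an equistable structure with positive
integer weights and target `t`. -/
def TargetEquistable [Fintype V] [DecidableEq V] (G : SimpleGraph V) (t : ℕ) : Prop :=
  ∃ w : V → ℕ, (∀ x, 1 ≤ w x) ∧ EquistableStruct G w t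

/-! ### Auxiliary lemmas -/

lemma twins_adj {G : SimpleGraph V} {u v x : V} (h : Twins G u v) (hxv : x ≠ v)
    (hadj : G.Adj u x) : G.Adj v x ∧ x ≠ u := by
  have hx : x ∈ G.neighborSet u \ {v} := ⟨hadj, hxv⟩
  rw [h] at hx
  exact ⟨hx.1, hx.2⟩

lemma twins_of_clique_class {G : SimpleGraph V} {C : Set V} (hC : TwinClass G C)
    (hcl : G.IsClique C) {c d : V} (hc : c ∈ C) (hd : d ∈ C) : Twins G c d := by
  obtain ⟨u, rfl⟩ := hC
  have hu : u ∈ {v | Twins G u v} := (rfl : Twins G u u)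
  have key : ∀ a b : V, Twins G u a → Twins G u b → ∀ x : V,
      G.Adj a x → x ≠ b → G.Adj b x := by
    intro a b _ha hb x hax hxb
    by_cases hxu : x = u
    · subst hxu
      exact (hcl hu hb (fun h => hxb h)).symm
    · have h1 := twins_adj (_ha.symm) hxu hax
      exact (twins_adj hb hxb h1.1).1
  unfold Twins
  ext x
  simp only [Set.mem_diff, SimpleGraph.mem_neighborSet, Set.mem_singleton_iff]
  constructor
  · rintro ⟨hax, hxd⟩
    exact ⟨key c d hc hd x hax hxd, fun h => (G.ne_of_adj hax).symm h⟩
  · rintro ⟨hax, hxc⟩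
    exact ⟨key d c hd hc x hax hxc, fun h => (G.ne_of_adj hax).symm h⟩

lemma stable_swap [DecidableEq V] {G : SimpleGraph V} {c d : V} (h : Twins G c d)
    {S : Finset V} (hS : IsStable G ↑S) (hc : c ∈ S) :
    IsStable G ↑(insert d (S.erase c)) := by
  intro x hx y hy hadj
  simp only [Finset.coe_insert, Set.mem_insert_iff, Finset.mem_coe, Finset.mem_erase] at hx hy
  rcases hx with rfl | ⟨hxc, hxS⟩
  · rcases hy with rfl | ⟨hyc, hyS⟩
    · exact G.ne_of_adj hadj rfl
    · have := twins_adj h.symm hyc hadj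
      exact hS (Finset.mem_coe.mpr hc) (Finset.mem_coe.mpr hyS) this.1
  · rcases hy with rfl | ⟨hyc, hyS⟩
    · have := twins_adj h.symm hxc hadj.symm
      exact hS (Finset.mem_coe.mpr hc) (Finset.mem_coe.mpr hxS) this.1
    · exact hS (Finset.mem_coe.mpr hxS) (Finset.mem_coe.mpr hyS) hadj

lemma maxstable_swap [Fintype V] [DecidableEq V] {G : SimpleGraph V} {c d : V}
    (h : Twins G c d) (hadj : G.Adj c d) {S : Finset V} (hS : IsMaxStable G S)
    (hc : c ∈ S) : IsMaxStable G (insert d (S.erase c)) := by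
  have hdS : d ∉ S := fun hd => hS.1 (Finset.mem_coe.mpr hc) (Finset.mem_coe.mpr hd) hadj
  refine ⟨stable_swap h hS.1 hc, ?_⟩
  intro T hT hsub
  have hdT : d ∈ T := hsub (Finset.mem_insert_self _ _)
  have hcT : c ∉ T := fun hcT => hT (Finset.mem_coe.mpr hcT) (Finset.mem_coe.mpr hdT) hadj
  have hT'stable : IsStable G ↑(insert c (T.erase d)) := stable_swap h.symm hT hdT
  have hsub' : S ⊆ insert c (T.erase d) := by
    intro x hx
    by_cases hxc : x = c
    · exact hxc ▸ Finset.mem_insert_self _ _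
    · have hxT : x ∈ T := hsub (Finset.mem_insert_of_mem (Finset.mem_erase.mpr ⟨hxc, hx⟩))
      have hxd : x ≠ d := fun h' => hdS (h' ▸ hx)
      exact Finset.mem_insert_of_mem (Finset.mem_erase.mpr ⟨hxd, hxT⟩)
  have hST' := hS.2 _ hT'stable hsub'
  have h1 : S.erase c = T.erase d := by
    rw [hST', Finset.erase_insert (fun hc' => hcT (Finset.mem_of_mem_erase hc'))]
  rw [h1, Finset.insert_erase hdT]

lemma exists_maxstable [Fintype V] [DecidableEq V] (G : SimpleGraph V) {S : Finset V}
    (hS : IsStable G ↑S) : ∃ T, S ⊆ T ∧ IsMaxStable G T := by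
  classical
  obtain ⟨T, hT, hmax'⟩ := Finset.exists_maximal
    (s := Finset.univ.filter fun T : Finset V => IsStable G ↑T ∧ S ⊆ T)
    ⟨S, by simp [hS]⟩
  have hmax : ∀ T' ∈ Finset.univ.filter (fun T : Finset V => IsStable G ↑T ∧ S ⊆ T), ¬ T < T' :=
    fun T' hT' hlt => hlt.2 (hmax' hT' hlt.1)
  simp only [Finset.mem_filter, Finset.mem_univ, true_and] at hT hmax
  refine ⟨T, hT.2, hT.1, fun T' hT' hsub => ?_⟩
  by_contra hne
  exact hmax T' ⟨hT', hT.2.trans hsub⟩ (lt_of_le_of_ne hsub hne)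

/-- The image in `V` of a finset of the subtype. -/
def pmap (s : Set V) (S' : Finset ↥s) : Finset V :=
  S'.map (Function.Embedding.subtype _)

/-- The preimage in the subtype of a finset of `V`. -/
noncomputable def plift (s : Set V) (T : Finset V) : Finset ↥s :=
  T.preimage (fun x : ↥s => (x : V)) (Subtype.val_injective.injOn)

lemma mem_pmap {s : Set V} {S' : Finset ↥s} {x : V} :
    x ∈ pmap s S' ↔ ∃ h : x ∈ s, (⟨x, h⟩ : ↥s) ∈ S' := by
  simp only [pmap, Finset.mem_map, Function.Embedding.coe_subtype]
  constructor
  · rintro ⟨⟨y, hy⟩, hmem, rfl⟩; exact ⟨hy, hmem⟩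
  · rintro ⟨h, hmem⟩; exact ⟨⟨x, h⟩, hmem, rfl⟩

lemma mem_pmap_of_mem {s : Set V} {S' : Finset ↥s} {y : ↥s} (hy : y ∈ S') :
    (y : V) ∈ pmap s S' := mem_pmap.mpr ⟨y.2, hy⟩

lemma pmap_mem_set {s : Set V} {S' : Finset ↥s} {x : V} (hx : x ∈ pmap s S') : x ∈ s := by
  obtain ⟨h, -⟩ := mem_pmap.mp hx; exact h

lemma mem_plift {s : Set V} {T : Finset V} {y : ↥s} :
    y ∈ plift s T ↔ (y : V) ∈ T := Finset.mem_preimage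

lemma pmap_plift {s : Set V} {T : Finset V} (hT : ∀ x ∈ T, x ∈ s) :
    pmap s (plift s T) = T := by
  ext x
  rw [mem_pmap]
  constructor
  · rintro ⟨h, hmem⟩; exact mem_plift.mp hmem
  · intro hx; exact ⟨hT x hx, mem_plift.mpr hx⟩

lemma plift_pmap {s : Set V} {S' : Finset ↥s} : plift s (pmap s S') = S' := by
  ext y
  rw [mem_plift, mem_pmap]
  constructor
  · rintro ⟨h, hmem⟩
    convert hmem using 1
  · intro hy; exact ⟨y.2, by simpa using hy⟩

lemma sum_pmap {s : Set V} (S' : Finset ↥s) (f : V → ℕ) :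
    ∑ x ∈ pmap s S', f x = ∑ y ∈ S', f ↑y :=
  Finset.sum_map S' _ f

lemma pmap_subset_pmap {s : Set V} {S' T' : Finset ↥s} (h : S' ⊆ T') :
    pmap s S' ⊆ pmap s T' := Finset.map_subset_map.mpr h

lemma pmap_injective {s : Set V} : Function.Injective (pmap s) :=
  Finset.map_injective _

theorem stmt8 [Fintype V] [DecidableEq V] (G : SimpleGraph V) (r k t : ℕ)
    (hr : 0 < r) (hk : 0 < k) (ht : 0 < t) (htr : t ≤ r)
    (C : Finset V) (hC : TwinClass G ↑C) (hclique : G.IsClique (↑C : Set V))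
    (hCr : r < C.card) (D : Finset V) (hD : D ⊆ C) (hDr : D.card = r) :
    (∃ w : V → ℕ, (∀ x, 1 ≤ w x ∧ w x ≤ k) ∧ EquistableStruct G w t) ↔
    (∃ w : ↥(↑(Cᶜ ∪ D) : Set V) → ℕ, (∀ x, 1 ≤ w x ∧ w x ≤ k) ∧
      EquistableStruct (G.induce ↑(Cᶜ ∪ D)) w t) := by
  classical
  set s : Set V := ↑(Cᶜ ∪ D) with hs
  have hmem : ∀ x : V, x ∈ s ↔ (x ∉ C ∨ x ∈ D) := by
    intro x; simp [hs]
  obtain ⟨d₀, hd₀⟩ : D.Nonempty := Finset.card_pos.mp (hDr ▸ hr)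
  have hd₀C : d₀ ∈ C := hD hd₀
  have hd₀s : d₀ ∈ s := (hmem d₀).mpr (Or.inr hd₀)
  have htw : ∀ {a b : V}, a ∈ C → b ∈ C → Twins G a b :=
    fun ha hb => twins_of_clique_class hC hclique (Finset.mem_coe.mpr ha) (Finset.mem_coe.mpr hb)
  have hadjC : ∀ {a b : V}, a ∈ C → b ∈ C → a ≠ b → G.Adj a b :=
    fun ha hb hne => hclique (Finset.mem_coe.mpr ha) (Finset.mem_coe.mpr hb) hne
  -- stability transfer
  have hstable : ∀ S' : Finset ↥s, IsStable (G.induce s) ↑S' ↔ IsStable G ↑(pmap s S') := by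
    intro S'
    constructor
    · intro h x hx y hy hadj
      rw [Finset.mem_coe] at hx hy
      obtain ⟨hxs, hx'⟩ := mem_pmap.mp hx
      obtain ⟨hys, hy'⟩ := mem_pmap.mp hy
      exact h (Finset.mem_coe.mpr hx') (Finset.mem_coe.mpr hy') hadj
    · intro h x hx y hy hadj
      exact h (Finset.mem_coe.mpr (mem_pmap_of_mem (Finset.mem_coe.mp hx)))
        (Finset.mem_coe.mpr (mem_pmap_of_mem (Finset.mem_coe.mp hy))) hadj
  -- the key correspondence of maximal stable sets
  have corr : ∀ S' : Finset ↥s, IsMaxStable (G.induce s) S' ↔ IsMaxStable G (pmap s S') := by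
    intro S'
    constructor
    · rintro ⟨hst, hmax⟩
      refine ⟨(hstable S').mp hst, ?_⟩
      intro T hT hsub
      have hTs : ∀ x ∈ T, x ∈ s := by
        by_contra hcon
        push_neg at hcon
        obtain ⟨c, hcT, hcs⟩ := hcon
        have hcC : c ∈ C ∧ c ∉ D := by
          by_contra h'
          push_neg at h'
          rcases Classical.em (c ∈ C) with h1 | h1
          · exact hcs ((hmem c).mpr (Or.inr (h' h1)))
          · exact hcs ((hmem c).mpr (Or.inl h1))
        have hd₀S : d₀ ∉ pmap s S' := by
          intro hd₀S
          have : G.Adj c d₀ := hadjC hcC.1 hd₀C (fun h => hcC.2 (by rw [h]; exact hd₀))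
          exact hT (Finset.mem_coe.mpr hcT) (Finset.mem_coe.mpr (hsub hd₀S)) this
        have hstab2 : IsStable G ↑(insert d₀ (pmap s S')) := by
          have key : ∀ z ∈ pmap s S', ¬ G.Adj d₀ z := by
            intro z hz hadj'
            have hzc : z ≠ c := fun h => hcs (by rw [← h]; exact pmap_mem_set hz)
            have := twins_adj (htw hd₀C hcC.1) hzc hadj'
            exact hT (Finset.mem_coe.mpr hcT) (Finset.mem_coe.mpr (hsub hz)) this.1
          intro x hx y hy hadj
          simp only [Finset.coe_insert, Set.mem_insert_iff, Finset.mem_coe] at hx hy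
          rcases hx with rfl | hx
          · rcases hy with rfl | hy
            · exact G.ne_of_adj hadj rfl
            · exact key y hy hadj
          · rcases hy with rfl | hy
            · exact key x hx hadj.symm
            · exact hT (Finset.mem_coe.mpr (hsub hx)) (Finset.mem_coe.mpr (hsub hy)) hadj
        have hsubset2 : ∀ x ∈ insert d₀ (pmap s S'), x ∈ s := by
          intro x hx
          rcases Finset.mem_insert.mp hx with rfl | hx
          · exact hd₀s
          · exact pmap_mem_set hx
        have hst2' : IsStable (G.induce s) ↑(plift s (insert d₀ (pmap s S'))) := by
          rw [hstable, pmap_plift hsubset2]; exact hstab2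
        have hsub2 : S' ⊆ plift s (insert d₀ (pmap s S')) := by
          intro y hy
          exact mem_plift.mpr (Finset.mem_insert_of_mem (mem_pmap_of_mem hy))
        have heq := hmax _ hst2' hsub2
        have heq2 : pmap s S' = insert d₀ (pmap s S') := by
          conv_lhs => rw [heq]
          exact pmap_plift hsubset2
        exact hd₀S (heq2 ▸ Finset.mem_insert_self d₀ (pmap s S'))
      have hTstable' : IsStable (G.induce s) ↑(plift s T) := by
        rw [hstable, pmap_plift hTs]; exact hT
      have hsub' : S' ⊆ plift s T := fun y hy => mem_plift.mpr (hsub (mem_pmap_of_mem hy))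
      have heq := hmax _ hTstable' hsub'
      calc pmap s S' = pmap s (plift s T) := by rw [← heq]
        _ = T := pmap_plift hTs
    · rintro ⟨hst, hmax⟩
      refine ⟨(hstable S').mpr hst, ?_⟩
      intro T' hT' hsub
      have := hmax (pmap s T') ((hstable T').mp hT') (pmap_subset_pmap hsub)
      exact pmap_injective this
  constructor
  · rintro ⟨w, hw, hEq⟩
    refine ⟨fun x => w ↑x, fun x => hw ↑x, ?_⟩
    intro S'
    rw [corr S', hEq (pmap s S'), sum_pmap S' w]
  · rintro ⟨w', hw', hEq'⟩
    set a := w' ⟨d₀, hd₀s⟩ with ha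
    set w : V → ℕ := fun x => if h : x ∈ s then w' ⟨x, h⟩ else a with hwdef
    have hws : ∀ (y : ↥s), w ↑y = w' y := fun y => dif_pos y.2
    have hwbound : ∀ x, 1 ≤ w x ∧ w x ≤ k := by
      intro x
      by_cases h : x ∈ s
      · rw [show w x = w' ⟨x, h⟩ from dif_pos h]; exact hw' _
      · rw [show w x = a from dif_neg h, ha]; exact hw' _
    have key : ∀ T : Finset V, (∀ x ∈ T, x ∈ s) → (IsMaxStable G T ↔ ∑ x ∈ T, w x = t) := by
      intro T hT
      have h1 : IsMaxStable G T ↔ IsMaxStable (G.induce s) (plift s T) := by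
        rw [corr (plift s T), pmap_plift hT]
      have h2 : ∑ x ∈ T, w x = ∑ y ∈ plift s T, w' y := by
        conv_lhs => rw [← pmap_plift hT]
        rw [sum_pmap (plift s T) w]
        exact Finset.sum_congr rfl fun y _ => hws y
      rw [h1, hEq' (plift s T), h2]
    have hwd₀ : w d₀ = a := (hws ⟨d₀, hd₀s⟩)
    have hconst : ∀ d ∈ D, w d = a := by
      intro d hd
      by_cases hdd : d = d₀
      · subst hdd; exact hwd₀
      · have hone : IsStable G ↑({d₀} : Finset V) := by
          intro x hx y hy hadj
          simp only [Finset.coe_singleton, Set.mem_singleton_iff] at hx hy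
          subst hx; subst hy; exact G.ne_of_adj hadj rfl
        obtain ⟨T, hsubT, hTmax⟩ := exists_maxstable G hone
        have hd₀T : d₀ ∈ T := hsubT (Finset.mem_singleton_self d₀)
        have hTC : ∀ x ∈ T, x ∈ C → x = d₀ := by
          intro x hxT hxC
          by_contra hne
          exact hTmax.1 (Finset.mem_coe.mpr hxT) (Finset.mem_coe.mpr hd₀T) (hadjC hxC hd₀C hne)
        have hTs : ∀ x ∈ T, x ∈ s := by
          intro x hx
          by_cases hxC : x ∈ C
          · exact (hmem x).mpr (Or.inr (by rw [hTC x hx hxC]; exact hd₀))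
          · exact (hmem x).mpr (Or.inl hxC)
        have hsumT : ∑ x ∈ T, w x = t := (key T hTs).mp hTmax
        have hdT : d ∉ T := fun h => hdd (hTC d h (hD hd))
        have hT2 : IsMaxStable G (insert d (T.erase d₀)) :=
          maxstable_swap (htw hd₀C (hD hd)) (hadjC hd₀C (hD hd) (fun h => hdd h.symm)) hTmax hd₀T
        have hT2s : ∀ x ∈ insert d (T.erase d₀), x ∈ s := by
          intro x hx
          rcases Finset.mem_insert.mp hx with rfl | hx
          · exact (hmem x).mpr (Or.inr hd)
          · exact hTs x (Finset.mem_of_mem_erase hx)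
        have hsumT2 : ∑ x ∈ insert d (T.erase d₀), w x = t := (key _ hT2s).mp hT2
        rw [Finset.sum_insert (fun h => hdT (Finset.mem_of_mem_erase h))] at hsumT2
        rw [← Finset.add_sum_erase T w hd₀T] at hsumT
        have hcan : w d = w d₀ := Nat.add_right_cancel (hsumT2.trans hsumT.symm)
        rw [hcan, hwd₀]
    have hwC : ∀ c ∈ C, w c = a := by
      intro c hc
      by_cases hcD : c ∈ D
      · exact hconst c hcD
      · have hcs : c ∉ s := fun h => by
          rcases (hmem c).mp h with h1 | h1
          · exact h1 hc
          · exact hcD h1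
        exact dif_neg hcs
    refine ⟨w, hwbound, ?_⟩
    intro S
    by_cases hSs : ∀ x ∈ S, x ∈ s
    · exact key S hSs
    · push_neg at hSs
      obtain ⟨c, hcS, hcs⟩ := hSs
      have hcC : c ∈ C := by
        by_contra h
        exact hcs ((hmem c).mpr (Or.inl h))
      have hcD : c ∉ D := fun h => hcs ((hmem c).mpr (Or.inr h))
      have hcd₀ : c ≠ d₀ := fun h => hcD (by rw [h]; exact hd₀)
      constructor
      · intro hmax
        have hSC : ∀ x ∈ S, x ∈ C → x = c := by
          intro x hx hxC
          by_contra hne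
          exact hmax.1 (Finset.mem_coe.mpr hx) (Finset.mem_coe.mpr hcS) (hadjC hxC hcC hne)
        have hd₀S : d₀ ∉ S := fun h => hcD (by rw [← hSC d₀ h hd₀C]; exact hd₀)
        have hT : IsMaxStable G (insert d₀ (S.erase c)) :=
          maxstable_swap (htw hcC hd₀C) (hadjC hcC hd₀C hcd₀) hmax hcS
        have hTs : ∀ x ∈ insert d₀ (S.erase c), x ∈ s := by
          intro x hx
          rcases Finset.mem_insert.mp hx with rfl | hx
          · exact hd₀s
          · by_cases hxC : x ∈ C
            · exact absurd (hSC x (Finset.mem_of_mem_erase hx) hxC) (Finset.mem_erase.mp hx).1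
            · exact (hmem x).mpr (Or.inl hxC)
        have hsumT := (key _ hTs).mp hT
        rw [Finset.sum_insert (fun h => hd₀S (Finset.mem_of_mem_erase h)), hwd₀] at hsumT
        rw [← Finset.add_sum_erase S w hcS, hwC c hcC]
        exact hsumT
      · intro hsum
        by_cases h2 : ∃ x ∈ S, x ∈ C ∧ x ≠ c
        · exfalso
          obtain ⟨c₂, hc₂S, hc₂C, hc₂ne⟩ := h2
          have hm2 : 1 < (S ∩ C).card := by
            rw [Finset.one_lt_card]
            exact ⟨c, Finset.mem_inter.mpr ⟨hcS, hcC⟩, c₂, Finset.mem_inter.mpr ⟨hc₂S, hc₂C⟩,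
              fun h => hc₂ne (h.symm ▸ rfl)⟩
          have hcard : S.card ≤ t := by
            calc S.card = ∑ _x ∈ S, 1 := by simp
              _ ≤ ∑ x ∈ S, w x := Finset.sum_le_sum (fun x _ => (hwbound x).1)
              _ = t := hsum
          have hmr : (S ∩ C).card ≤ D.card := by
            calc (S ∩ C).card ≤ S.card := Finset.card_le_card Finset.inter_subset_left
              _ ≤ t := hcard
              _ ≤ r := htr
              _ = D.card := hDr.symm
          obtain ⟨E, hED, hEcard⟩ := Finset.exists_subset_card_eq hmr
          have hdisj : Disjoint (S \ C) E := by
            rw [Finset.disjoint_left]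
            intro x hx hxE
            exact (Finset.mem_sdiff.mp hx).2 (hD (hED hxE))
          have hsumE : ∑ x ∈ E, w x = ∑ x ∈ S ∩ C, w x := by
            rw [Finset.sum_congr rfl (fun x hx => hwC x (hD (hED hx))),
              Finset.sum_congr rfl (fun x hx => hwC x (Finset.mem_inter.mp hx).2),
              Finset.sum_const, Finset.sum_const, hEcard]
          have hsumT : ∑ x ∈ (S \ C) ∪ E, w x = t := by
            rw [Finset.sum_union hdisj, hsumE, add_comm, Finset.sum_inter_add_sum_sdiff]
            exact hsum
          have hTs : ∀ x ∈ (S \ C) ∪ E, x ∈ s := by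
            intro x hx
            rcases Finset.mem_union.mp hx with hx | hx
            · exact (hmem x).mpr (Or.inl (Finset.mem_sdiff.mp hx).2)
            · exact (hmem x).mpr (Or.inr (hED hx))
          have hTmax := (key _ hTs).mpr hsumT
          have hE2 : 1 < E.card := hEcard ▸ hm2
          obtain ⟨e₁, he₁, e₂, he₂, hne⟩ := Finset.one_lt_card.mp hE2
          exact hTmax.1 (Finset.mem_coe.mpr (Finset.mem_union_right _ he₁))
            (Finset.mem_coe.mpr (Finset.mem_union_right _ he₂))
            (hadjC (hD (hED he₁)) (hD (hED he₂)) hne)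
        · push_neg at h2
          have hd₀S : d₀ ∉ S := fun h => hcD (by rw [← h2 d₀ h hd₀C]; exact hd₀)
          have hTs : ∀ x ∈ insert d₀ (S.erase c), x ∈ s := by
            intro x hx
            rcases Finset.mem_insert.mp hx with rfl | hx
            · exact hd₀s
            · by_cases hxC : x ∈ C
              · exact absurd (h2 x (Finset.mem_of_mem_erase hx) hxC) (Finset.mem_erase.mp hx).1
              · exact (hmem x).mpr (Or.inl hxC)
          have hsumS : w c + ∑ x ∈ S.erase c, w x = t := by
            rw [Finset.add_sum_erase S w hcS]; exact hsum
          have hsumT : ∑ x ∈ insert d₀ (S.erase c), w x = t := by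
            rw [Finset.sum_insert (fun h => hd₀S (Finset.mem_of_mem_erase h)), hwd₀]
            rw [hwC c hcC] at hsumS
            exact hsumS
          have hTmax := (key _ hTs).mpr hsumT
          have hS' : IsMaxStable G (insert c ((insert d₀ (S.erase c)).erase d₀)) :=
            maxstable_swap (htw hd₀C hcC) (hadjC hd₀C hcC (fun h => hcd₀ h.symm)) hTmax
              (Finset.mem_insert_self _ _)
          rwa [Finset.erase_insert (fun h => hd₀S (Finset.mem_of_mem_erase h)),
            Finset.insert_erase hcS] at hS'
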